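/- Let n = 2^m, let f: F^m → F^m be a bijective APN operator, let P = { x ∈ F^n : Σx_i = 0, Σ x_i α_i = 0 } and P' = { x ∈ F^n : Σx_i = 0, Σ x_i f(α_i) = 0 } be the two associated Hamming codes, let Q be an odd coset of P'. Then the code R(P,Q) = { r(p) : p ∈ P } ⊆ X^n has minimum Hamming distance at least 5, and together with the fact that the radius-2 ball { y ∈ X^n : d_H(0^n, y) ≤ 2 } is a diameter-4 anticode of cardinality n², R(P,Q) is a diameter perfect distance-5 code (|R(P,Q)| · n² = |X^n|). -/

import Mathlib

/-- Binary words of length `n`. -/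
abbrev BW (n : ℕ) := Fin n → ZMod 2

/-- Ternary words of length `n` over `{0,1,*}`, with `none` playing the role of `*`. -/
abbrev TW (n : ℕ) := Fin n → Option (ZMod 2)

/-- Membership in `X^n`: exactly one coordinate equals `*`. -/
def isX {n : ℕ} (w : TW n) : Prop := (Finset.univ.filter (fun i => w i = none)).card = 1

/-- Embedding of binary words into ternary words. -/
def emb {n : ℕ} (x : BW n) : TW n := fun i => some (x i)

/-- Coset `{ x ∈ F^n : Σ x_i = ε, Σ x_i α_i = β }` of the Hamming code with columns `α`. -/
def coset {n m : ℕ} (α : Fin n → BW m) (ε : ZMod 2) (β : BW m) : Set (BW n) :=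
  {x | (∑ i, x i) = ε ∧ (∑ i, x i • α i) = β}

/-- `r(p)` for an edge `{p, q}`: `*` where `p` and `q` differ, `p` elsewhere. -/
def rword {n : ℕ} (p q : BW n) : TW n := fun i => if p i = q i then some (p i) else none

/-! ### Auxiliary lemmas -/

/-- support of a binary word -/
def bsupp {n : ℕ} (x : BW n) : Finset (Fin n) := Finset.univ.filter (fun i => x i ≠ 0)

lemma zmod2_cases : ∀ a : ZMod 2, a ≠ 0 → a = 1 := by decide

lemma bw_addself {m : ℕ} (u : BW m) : u + u = 0 := by
  funext i
  have : ∀ a : ZMod 2, a + a = 0 := by decide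
  exact this (u i)

lemma bw_add_eq_zero {m : ℕ} {u v : BW m} (h : u + v = 0) : u = v := by
  have := congrArg (· + v) h
  simpa [add_assoc, bw_addself] using this

lemma ssum_eq {n m : ℕ} (x : BW n) (v : Fin n → BW m) :
    (∑ i, x i • v i) = ∑ i ∈ bsupp x, v i := by
  rw [bsupp, Finset.sum_filter]
  apply Finset.sum_congr rfl
  intro i _
  by_cases hx : x i = 0
  · simp [hx]
  · simp [hx, zmod2_cases _ hx]

lemma psum_eq {n : ℕ} (x : BW n) :
    (∑ i, x i) = ((bsupp x).card : ZMod 2) := by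
  have h : (∑ i, x i) = ∑ i ∈ bsupp x, x i := by
    rw [bsupp, Finset.sum_filter]
    apply Finset.sum_congr rfl
    intro i _
    by_cases hx : x i = 0 <;> simp [hx]
  rw [h]
  rw [Finset.sum_congr rfl (fun i hi => zmod2_cases (x i) (by simpa [bsupp] using hi))]
  simp

lemma bsupp_card_even {n : ℕ} (x : BW n) (h : (∑ i, x i) = 0) :
    2 ∣ (bsupp x).card := by
  rw [psum_eq] at h
  exact (ZMod.natCast_eq_zero_iff _ 2).mp h

lemma bsupp_ne_zero {n : ℕ} (x : BW n) (hx : x ≠ 0) : (bsupp x).Nonempty := by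
  rcases Function.ne_iff.mp hx with ⟨i, hi⟩
  exact ⟨i, by simpa [bsupp] using hi⟩

/-- weight lemma: codes with distinct nonzero-sum columns and overall parity have min weight 4 -/
lemma weight_ge_four {n m : ℕ} {v : Fin n → BW m} (hv : Function.Injective v)
    {x : BW n} (hx : x ≠ 0) (h0 : (∑ i, x i) = 0) (h1 : (∑ i, x i • v i) = 0) :
    4 ≤ (bsupp x).card := by
  have heven := bsupp_card_even x h0
  have hpos : 0 < (bsupp x).card := Finset.card_pos.mpr (bsupp_ne_zero x hx)
  have hne2 : (bsupp x).card ≠ 2 := by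
    intro h2
    obtain ⟨j, k, hjk, hs⟩ := Finset.card_eq_two.mp h2
    rw [ssum_eq, hs, Finset.sum_insert (by simp [hjk]), Finset.sum_singleton] at h1
    exact hjk (hv (bw_add_eq_zero h1))
  omega

lemma weight_ge_six {n m : ℕ} {α : Fin n → BW m} (hα : Function.Injective α)
    {f : BW m → BW m}
    (hAPN : ∀ a b : BW m, ¬(a = 0 ∧ b = 0) →
      Set.ncard {x : BW m | f x + f (x + a) = b} = 0 ∨
      Set.ncard {x : BW m | f x + f (x + a) = b} = 2)
    {x : BW n} (hx : x ≠ 0) (h0 : (∑ i, x i) = 0) (h1 : (∑ i, x i • α i) = 0)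
    (h2 : (∑ i, x i • f (α i)) = 0) : 6 ≤ (bsupp x).card := by
  have h4 := weight_ge_four hα hx h0 h1
  have heven := bsupp_card_even x h0
  have hne4 : (bsupp x).card ≠ 4 := by
    intro hc
    obtain ⟨j, hj⟩ : (bsupp x).Nonempty := Finset.card_pos.mp (by omega)
    have hcerase : ((bsupp x).erase j).card = 3 := by
      rw [Finset.card_erase_of_mem hj, hc]
    obtain ⟨k, l, r, hkl, hkr, hlr, ht⟩ := Finset.card_eq_three.mp hcerase
    have hjk : j ≠ k := by
      intro h; subst h
      have := Finset.notMem_erase j (bsupp x); rw [ht] at this; simp at this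
    have hjl : j ≠ l := by
      intro h; subst h
      have := Finset.notMem_erase j (bsupp x); rw [ht] at this; simp at this
    have hjr : j ≠ r := by
      intro h; subst h
      have := Finset.notMem_erase j (bsupp x); rw [ht] at this; simp at this
    have hs : bsupp x = insert j {k, l, r} := by
      rw [← ht, Finset.insert_erase hj]
    have hsum : ∀ v : Fin n → BW m, (∑ i, x i • v i) = v j + (v k + (v l + v r)) := by
      intro v
      rw [ssum_eq, hs, Finset.sum_insert (by simp [hjk, hjl, hjr]),
        Finset.sum_insert (by simp [hkl, hkr]), Finset.sum_insert (by simp [hlr]),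
        Finset.sum_singleton]
    have hα4 : α j + (α k + (α l + α r)) = 0 := (hsum α).symm.trans h1
    have hf4 : f (α j) + (f (α k) + (f (α l) + f (α r))) = 0 :=
      (hsum (fun i => f (α i))).symm.trans h2
    have hane : α j + α k ≠ 0 := fun h => hjk (hα (bw_add_eq_zero h))
    have hlr_sum : α l + α r = α j + α k := by
      calc α l + α r = (α j + α k) + (α j + (α k + (α l + α r))) := by
            rw [show (α j + α k) + (α j + (α k + (α l + α r)))
              = ((α j + α j) + (α k + α k)) + (α l + α r) by ring, bw_addself, bw_addself,
              zero_add, zero_add]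
        _ = α j + α k := by rw [hα4, add_zero]
    have hflr_sum : f (α l) + f (α r) = f (α j) + f (α k) := by
      calc f (α l) + f (α r)
          = (f (α j) + f (α k)) + (f (α j) + (f (α k) + (f (α l) + f (α r)))) := by
            rw [show (f (α j) + f (α k)) + (f (α j) + (f (α k) + (f (α l) + f (α r))))
              = ((f (α j) + f (α j)) + (f (α k) + f (α k))) + (f (α l) + f (α r)) by ring,
              bw_addself, bw_addself, zero_add, zero_add]
        _ = f (α j) + f (α k) := by rw [hf4, add_zero]
    have hcancel : ∀ u w : BW m, u + (u + w) = w := by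
      intro u w; rw [← add_assoc, bw_addself, zero_add]
    have hmj : α j ∈ {x : BW m | f x + f (x + (α j + α k)) = f (α j) + f (α k)} := by
      have h : α j + (α j + α k) = α k := hcancel _ _
      simp only [Set.mem_setOf_eq, h]
    have hmk : α k ∈ {x : BW m | f x + f (x + (α j + α k)) = f (α j) + f (α k)} := by
      have h : α k + (α j + α k) = α j := by
        rw [show α k + (α j + α k) = (α k + α k) + α j by ring, bw_addself, zero_add]
      simp only [Set.mem_setOf_eq, h]; ring
    have hml : α l ∈ {x : BW m | f x + f (x + (α j + α k)) = f (α j) + f (α k)} := by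
      have h : α l + (α j + α k) = α r := by rw [← hlr_sum]; exact hcancel _ _
      simp only [Set.mem_setOf_eq, h, hflr_sum]
    have hmr : α r ∈ {x : BW m | f x + f (x + (α j + α k)) = f (α j) + f (α k)} := by
      have h : α r + (α j + α k) = α l := by
        rw [← hlr_sum, show α r + (α l + α r) = (α r + α r) + α l by ring, bw_addself, zero_add]
      simp only [Set.mem_setOf_eq, h]
      rw [← hflr_sum]; ring
    have hTcard : ({α j, α k, α l, α r} : Finset (BW m)).card = 4 := by
      rw [Finset.card_insert_of_notMem (by simp [hα.ne hjk, hα.ne hjl, hα.ne hjr]),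
        Finset.card_insert_of_notMem (by simp [hα.ne hkl, hα.ne hkr]),
        Finset.card_insert_of_notMem (by simp [hα.ne hlr]), Finset.card_singleton]
    have h4le : 4 ≤ Set.ncard {x : BW m | f x + f (x + (α j + α k)) = f (α j) + f (α k)} := by
      rw [← hTcard, ← Set.ncard_coe_finset]
      apply Set.ncard_le_ncard _ (Set.toFinite _)
      intro y hy
      simp only [Finset.coe_insert, Finset.coe_singleton, Set.mem_insert_iff,
        Set.mem_singleton_iff] at hy
      rcases hy with h|h|h|h <;> subst h
      · exact hmj
      · exact hmk
      · exact hml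
      · exact hmr
    rcases hAPN (α j + α k) (f (α j) + f (α k)) (fun h => hane h.1) with h|h <;> omega
  omega

theorem stmt18 {m : ℕ} (hm : 2 ≤ m) (n : ℕ) (hn : n = 2 ^ m)
    (α : Fin n → BW m) (hα : Function.Bijective α)
    (f : BW m → BW m) (hf : Function.Bijective f)
    (hAPN : ∀ a b : BW m, ¬(a = 0 ∧ b = 0) →
      Set.ncard {x : BW m | f x + f (x + a) = b} = 0 ∨
      Set.ncard {x : BW m | f x + f (x + a) = b} = 2)
    (β' : BW m) :
    let P : Set (BW n) := coset α 0 0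
    let Q : Set (BW n) := coset (fun i => f (α i)) 1 β'
    let R : Set (TW n) :=
      {c | ∃ p q : BW n, p ∈ P ∧ q ∈ Q ∧ hammingDist p q = 1 ∧ c = rword p q}
    let A : Set (TW n) := {y | isX y ∧ hammingDist y (emb 0) ≤ 2}
    (∀ c ∈ R, ∀ c' ∈ R, c ≠ c' → 5 ≤ hammingDist c c') ∧
    Set.ncard A = n ^ 2 ∧
    (∀ y ∈ A, ∀ y' ∈ A, hammingDist y y' ≤ 4) ∧
    Set.ncard R * n ^ 2 = n * 2 ^ (n - 1) := by
  intro P Q R A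
  have hFbij : Function.Bijective (fun i => f (α i)) := hf.comp hα
  -- sum helper lemmas
  have hsingle_s : ∀ (v : Fin n → BW m) (i : Fin n),
      (∑ j, (Pi.single i 1 : BW n) j • v j) = v i := by
    intro v i
    rw [Finset.sum_eq_single i]
    · simp
    · intro b _ hb; rw [Pi.single_eq_of_ne hb, zero_smul]
    · simp
  have hsingle_p : ∀ i : Fin n, (∑ j, (Pi.single i 1 : BW n) j) = 1 := by
    intro i; simp [Finset.sum_pi_single']
  have hadd_s : ∀ (v : Fin n → BW m) (x y : BW n),
      (∑ j, (x + y) j • v j) = (∑ j, x j • v j) + ∑ j, y j • v j := by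
    intro v x y
    rw [← Finset.sum_add_distrib]
    exact Finset.sum_congr rfl (fun j _ => by rw [Pi.add_apply, add_smul])
  have hadd_p : ∀ (x y : BW n), (∑ j, (x + y) j) = (∑ j, x j) + ∑ j, y j := by
    intro x y; rw [← Finset.sum_add_distrib]; rfl
  have hcancel : ∀ u w : BW m, u + (u + w) = w := by
    intro u w; rw [← add_assoc, bw_addself, zero_add]
  -- the canonical index and neighbor
  choose idx hidx0 using fun p : BW n => hFbij.surjective (β' + ∑ j, p j • f (α j))
  have hidx : ∀ p : BW n, f (α (idx p)) = β' + ∑ j, p j • f (α j) := hidx0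
  have hs_p : ∀ p : BW n, (∑ j, p j • f (α j)) = β' + f (α (idx p)) := by
    intro p; rw [hidx p, hcancel]
  set qf : BW n → BW n := fun p => p + Pi.single (idx p) 1 with hqf
  have hqf_mem : ∀ p ∈ P, qf p ∈ Q := by
    intro p hp
    obtain ⟨hp1, hp2⟩ := hp
    constructor
    · show (∑ j, (p + Pi.single (idx p) 1 : BW n) j) = 1
      rw [hadd_p, hp1, hsingle_p, zero_add]
    · show (∑ j, (p + Pi.single (idx p) 1 : BW n) j • f (α j)) = β'
      rw [hadd_s, hsingle_s, hs_p p, add_assoc, bw_addself, add_zero]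
  have hqf_dist : ∀ p : BW n, hammingDist p (qf p) = 1 := by
    intro p
    have hE : (Finset.univ.filter fun j => p j ≠ qf p j) = {idx p} := by
      ext j
      simp only [Finset.mem_filter, Finset.mem_univ, true_and, Finset.mem_singleton, hqf,
        Pi.add_apply]
      constructor
      · intro h; by_contra hj; exact h (by rw [Pi.single_eq_of_ne hj, add_zero])
      · intro h; subst h; rw [Pi.single_eq_same]
        have : ∀ a : ZMod 2, a ≠ a + 1 := by decide
        exact this _
    show (Finset.univ.filter fun j => p j ≠ qf p j).card = 1
    rw [hE, Finset.card_singleton]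
  have huniq : ∀ p q' : BW n, p ∈ P → q' ∈ Q → hammingDist p q' = 1 → q' = qf p := by
    intro p q' _ hq' hd
    obtain ⟨i, hi⟩ := Finset.card_eq_one.mp hd
    have hne1 : ∀ a b : ZMod 2, a ≠ b → b = a + 1 := by decide
    have hqi : q' = p + Pi.single i 1 := by
      funext j
      by_cases hj : j = i
      · subst hj
        have hmem : j ∈ Finset.univ.filter (fun k => p k ≠ q' k) := by
          rw [hi]; exact Finset.mem_singleton_self _
        have : p j ≠ q' j := by simpa using hmem
        rw [Pi.add_apply, Pi.single_eq_same]; exact hne1 _ _ this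
      · have hnd : ¬ (p j ≠ q' j) := by
          intro hcon
          have : j ∈ ({i} : Finset (Fin n)) := by
            rw [← hi]; simp [hcon]
          exact hj (Finset.mem_singleton.mp this)
        push_neg at hnd
        rw [Pi.add_apply, Pi.single_eq_of_ne hj, add_zero, ← hnd]
    have hq2 : (∑ j, q' j • f (α j)) = β' := hq'.2
    rw [hqi, hadd_s, hsingle_s, hs_p p, add_assoc] at hq2
    have hfi : f (α i) = f (α (idx p)) := by
      have h0 : f (α (idx p)) + f (α i) = 0 := by
        have := congrArg (fun u => β' + u) hq2
        simpa [hcancel] using (hcancel β' (f (α (idx p)) + f (α i))).symm.trans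
          (by rw [hq2]; exact (bw_addself β') ▸ rfl)
      exact (bw_add_eq_zero h0).symm
    have : i = idx p := hFbij.injective (by exact hfi)
    rw [hqi, this]
  -- description of the r-word
  have hgval : ∀ (p : BW n) (j : Fin n),
      rword p (qf p) j = if j = idx p then none else some (p j) := by
    intro p j
    by_cases hj : j = idx p
    · subst hj
      have hne : ∀ a : ZMod 2, ¬ (a = a + 1) := by decide
      rw [if_pos rfl]
      show (if p (idx p) = qf p (idx p) then some (p (idx p)) else none) = none
      rw [if_neg]
      show ¬ p (idx p) = (p + Pi.single (idx p) 1 : BW n) (idx p)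
      rw [Pi.add_apply, Pi.single_eq_same]
      exact hne _
    · rw [if_neg hj]
      show (if p j = qf p j then some (p j) else none) = some (p j)
      rw [if_pos]
      show p j = (p + Pi.single (idx p) 1 : BW n) j
      rw [Pi.add_apply, Pi.single_eq_of_ne hj, add_zero]
  -- R is the image of P
  have hRimg : R = (fun p => rword p (qf p)) '' P := by
    ext c
    constructor
    · rintro ⟨p, q', hp, hq', hd, rfl⟩
      exact ⟨p, hp, by rw [huniq p q' hp hq' hd]⟩
    · rintro ⟨p, hp, rfl⟩
      exact ⟨p, qf p, hp, hqf_mem p hp, hqf_dist p, rfl⟩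
  -- injectivity on P
  have hg_injOn : Set.InjOn (fun p => rword p (qf p)) P := by
    intro p hp p' hp' hpp
    simp only at hpp
    have hi : idx p = idx p' := by
      by_contra hne
      have h1 := congrFun hpp (idx p)
      rw [hgval, hgval, if_pos rfl, if_neg hne] at h1
      exact Option.some_ne_none _ h1.symm
    have hcoord : ∀ j, j ≠ idx p → p j = p' j := by
      intro j hj
      have h1 := congrFun hpp j
      rw [hgval, hgval, if_neg hj, if_neg (hi ▸ hj)] at h1
      exact Option.some_injective _ h1
    funext j
    by_cases hj : j = idx p
    · have e1 : p j + ∑ k ∈ Finset.univ.erase j, p k = 0 := by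
        rw [Finset.add_sum_erase _ _ (Finset.mem_univ j)]; exact hp.1
      have e2 : p' j + ∑ k ∈ Finset.univ.erase j, p' k = 0 := by
        rw [Finset.add_sum_erase _ _ (Finset.mem_univ j)]; exact hp'.1
      have esum : (∑ k ∈ Finset.univ.erase j, p k) = ∑ k ∈ Finset.univ.erase j, p' k :=
        Finset.sum_congr rfl (fun k hk => hcoord k (hj ▸ Finset.ne_of_mem_erase hk))
      rw [esum] at e1
      have : ∀ a b c : ZMod 2, a + c = 0 → b + c = 0 → a = b := by decide
      exact this _ _ _ e1 e2
    · exact hcoord j hj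
  have hzne : ∀ a b : ZMod 2, (a + b ≠ 0) ↔ a ≠ b := by decide
  refine ⟨?_, ?_, ?_, ?_⟩
  · -- minimum distance at least 5
    intro c hc c' hc' hne
    rw [hRimg] at hc hc'
    obtain ⟨p, hp, rfl⟩ := hc
    obtain ⟨p', hp', rfl⟩ := hc'
    simp only at hne ⊢
    have hp_ne : p ≠ p' := fun h => hne (by rw [h])
    set D : Finset (Fin n) := Finset.univ.filter (fun j => p j ≠ p' j) with hD
    have hDsupp : bsupp (p + p') = D := by
      ext j
      simp only [bsupp, hD, Finset.mem_filter, Finset.mem_univ, true_and, Pi.add_apply]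
      exact hzne _ _
    have hx_ne : p + p' ≠ 0 := by
      intro h
      apply hp_ne
      funext j
      have := congrFun h j
      have h2 : ∀ a b : ZMod 2, a + b = 0 → a = b := by decide
      exact h2 _ _ this
    have hx_p : (∑ j, (p + p') j) = 0 := by rw [hadd_p, hp.1, hp'.1, add_zero]
    have hx_s : (∑ j, (p + p') j • α j) = 0 := by rw [hadd_s, hp.2, hp'.2, add_zero]
    have hD4 : 4 ≤ D.card := hDsupp ▸ weight_ge_four hα.injective hx_ne hx_p hx_s
    show 5 ≤ (Finset.univ.filter fun j => rword p (qf p) j ≠ rword p' (qf p') j).card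
    by_cases hii : idx p = idx p'
    · -- equal star positions: p + p' is in the doubly-even code, weight ≥ 6
      have hx_f : (∑ j, (p + p') j • f (α j)) = 0 := by
        rw [hadd_s, hs_p p, hs_p p', hii]
        exact bw_addself _
      have h6 : 6 ≤ D.card :=
        hDsupp ▸ weight_ge_six hα.injective hAPN hx_ne hx_p hx_s hx_f
      have hE : (Finset.univ.filter fun j => rword p (qf p) j ≠ rword p' (qf p') j)
          = D.erase (idx p) := by
        ext j
        simp only [Finset.mem_filter, Finset.mem_univ, true_and, Finset.mem_erase, hD]
        rw [hgval, hgval]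
        by_cases hj : j = idx p
        · rw [if_pos hj, if_pos (hii ▸ hj)]
          simp [hj]
        · rw [if_neg hj, if_neg (hii ▸ hj)]
          simp [hj]
      rw [hE]
      have := Finset.pred_card_le_card_erase (s := D) (a := idx p)
      omega
    · -- distinct star positions
      set D2 : Finset (Fin n) := (D.erase (idx p)).erase (idx p') with hD2
      have hE : (Finset.univ.filter fun j => rword p (qf p) j ≠ rword p' (qf p') j)
          = insert (idx p) (insert (idx p') D2) := by
        ext j
        simp only [Finset.mem_filter, Finset.mem_univ, true_and, Finset.mem_insert, hD2,
          Finset.mem_erase, hD]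
        rw [hgval, hgval]
        by_cases hj : j = idx p
        · rw [if_pos hj, if_neg (hj ▸ hii : ¬ j = idx p')]
          simp [hj]
        · rw [if_neg hj]
          by_cases hj' : j = idx p'
          · rw [if_pos hj']
            simp [hj']
          · rw [if_neg hj']
            simp [hj, hj']
      have hnotin2 : idx p' ∉ D2 := fun h => (Finset.mem_erase.mp h).1 rfl
      have hnotin1 : idx p ∉ insert (idx p') D2 := by
        intro h
        rcases Finset.mem_insert.mp h with h|h
        · exact hii h
        · exact (Finset.mem_erase.mp (Finset.mem_of_mem_erase h)).1 rfl
      have hcard : (insert (idx p) (insert (idx p') D2)).card = 2 + D2.card := by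
        rw [Finset.card_insert_of_notMem hnotin1, Finset.card_insert_of_notMem hnotin2]
        omega
      have h3 : 3 ≤ D2.card := by
        by_cases hiD : idx p ∈ D ∧ idx p' ∈ D
        · -- both stars inside the difference: use the second Hamming code
          set y : BW n := (p + p') + (Pi.single (idx p) 1 + Pi.single (idx p') 1) with hy
          have hyval : ∀ j, y j = (p j + p' j) +
              ((Pi.single (idx p) 1 : BW n) j + (Pi.single (idx p') 1 : BW n) j) := by
            intro j; rfl
          have hyD : bsupp y = D2 := by
            ext j
            simp only [bsupp, Finset.mem_filter, Finset.mem_univ, true_and, hD2,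
              Finset.mem_erase, hD, hyval j]
            have hxab : ∀ a b : ZMod 2, a ≠ b → a + b = 1 := by decide
            have h110 : (1 + 1 : ZMod 2) = 0 := by decide
            by_cases hj : j = idx p
            · have hs1 : (Pi.single (idx p) 1 : BW n) j = 1 := by
                rw [hj]; exact Pi.single_eq_same _ _
              have hs2 : (Pi.single (idx p') 1 : BW n) j = 0 :=
                Pi.single_eq_of_ne (fun hc => hii (hj.symm.trans hc)) _
              have hdne : p j ≠ p' j := by
                have h0 := hiD.1
                rw [hD, Finset.mem_filter] at h0
                rw [hj]; exact h0.2
              rw [hs1, hs2, add_zero, hxab _ _ hdne, h110]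
              simp [hj]
            · rw [Pi.single_eq_of_ne hj, zero_add]
              by_cases hj' : j = idx p'
              · have hs2 : (Pi.single (idx p') 1 : BW n) j = 1 := by
                  rw [hj']; exact Pi.single_eq_same _ _
                have hdne : p j ≠ p' j := by
                  have h0 := hiD.2
                  rw [hD, Finset.mem_filter] at h0
                  rw [hj']; exact h0.2
                rw [hs2, hxab _ _ hdne, h110]
                simp [hj']
              · rw [Pi.single_eq_of_ne hj', add_zero]
                simp [hj, hj', hzne]
          have hD2ge : 2 ≤ D2.card := by
            rw [hD2]
            have h1 := Finset.pred_card_le_card_erase (s := D) (a := idx p)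
            have h2 := Finset.pred_card_le_card_erase (s := D.erase (idx p)) (a := idx p')
            omega
          have hy_ne : y ≠ 0 := by
            obtain ⟨j, hj⟩ := Finset.card_pos.mp (by omega : 0 < D2.card)
            rw [← hyD] at hj
            intro h
            rw [bsupp, Finset.mem_filter] at hj
            exact hj.2 (by rw [h]; rfl)
          have hy_p : (∑ j, y j) = 0 := by
            rw [hy, hadd_p, hx_p, hadd_p, hsingle_p, hsingle_p]
            decide
          have hy_f : (∑ j, y j • f (α j)) = 0 := by
            rw [hy, hadd_s, hadd_s, hadd_s, hsingle_s, hsingle_s, hs_p p, hs_p p']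
            rw [show (β' + f (α (idx p)) + (β' + f (α (idx p'))))
                + (f (α (idx p)) + f (α (idx p')))
              = (β' + β') + ((f (α (idx p)) + f (α (idx p)))
                + (f (α (idx p')) + f (α (idx p')))) by ring,
              bw_addself, bw_addself, bw_addself]
            simp
          have := weight_ge_four hFbij.injective hy_ne hy_p hy_f
          rw [hyD] at this
          omega
        · rcases not_and_or.mp hiD with h|h
          · rw [hD2, Finset.erase_eq_of_notMem h]
            have := Finset.pred_card_le_card_erase (s := D) (a := idx p')
            omega
          · rw [hD2, Finset.erase_eq_of_notMem
              (fun hcon => h (Finset.mem_of_mem_erase hcon))]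
            have := Finset.pred_card_le_card_erase (s := D) (a := idx p)
            omega
      rw [hE, hcard]
      omega
  · -- cardinality of the anticode
    classical
    set h : Fin n × Fin n → TW n :=
      (fun z k => if k = z.1 then none else if k = z.2 then some 1 else some 0) with hh
    have h01 : ¬ (some (0:ZMod 2) = some 1) := by decide
    have hinj : Function.Injective h := by
      rintro ⟨i, j⟩ ⟨i', j'⟩ he
      have hii : i = i' := by
        by_contra hcon
        have h1 := congrFun he i
        simp only [hh, if_pos rfl] at h1
        rw [if_neg hcon] at h1
        by_cases h2 : i = j' <;> simp [h2] at h1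
      subst hii
      have hjj : j = j' := by
        by_cases hji : j = i
        · by_cases hji' : j' = i
          · rw [hji, hji']
          · exfalso
            have hjj' : ¬ (j' = j) := fun hc => hji' (hc.trans hji)
            have h1 := congrFun he j'
            simp [hh, hji', hjj'] at h1
        · by_cases h2 : j = j'
          · exact h2
          · exfalso
            have h1 := congrFun he j
            simp [hh, hji, h2] at h1
      rw [hjj]
    have hA : A = Set.range h := by
      ext y
      constructor
      · rintro ⟨hy1, hy2⟩
        obtain ⟨i, hi⟩ := Finset.card_eq_one.mp hy1
        have hyi : y i = none := by
          have hmem : i ∈ Finset.univ.filter (fun k => y k = none) := by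
            rw [hi]; exact Finset.mem_singleton_self i
          simpa using hmem
        have hnone : ∀ k, y k = none → k = i := by
          intro k hk
          have hmem : k ∈ ({i} : Finset (Fin n)) := by rw [← hi]; simp [hk]
          simpa using hmem
        have hione : i ∈ (Finset.univ.filter fun k => y k ≠ emb (0:BW n) k) := by
          exact Finset.mem_filter.mpr ⟨Finset.mem_univ _, by simp [hyi, emb]⟩
        have hcard1 : ((Finset.univ.filter fun k => y k ≠ emb (0:BW n) k).erase i).card ≤ 1 := by
          have hy2' : (Finset.univ.filter fun k => y k ≠ emb (0:BW n) k).card ≤ 2 := hy2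
          rw [Finset.card_erase_of_mem hione]
          omega
        have hval : ∀ k, k ≠ i →
            k ∉ ((Finset.univ.filter fun kk => y kk ≠ emb (0:BW n) kk).erase i) →
            y k = some 0 := by
          intro k hk hnm
          by_contra hc
          refine hnm (Finset.mem_erase.mpr ⟨hk, Finset.mem_filter.mpr ⟨Finset.mem_univ k, ?_⟩⟩)
          intro hc2
          exact hc (hc2.trans rfl)
        rcases Finset.eq_empty_or_nonempty
            ((Finset.univ.filter fun k => y k ≠ emb (0:BW n) k).erase i) with hE|⟨j, hj⟩
        · refine ⟨(i, i), funext fun k => ?_⟩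
          simp only [hh]
          by_cases hk : k = i
          · rw [if_pos hk, hk, hyi]
          · rw [if_neg hk, if_neg hk, (hval k hk (by rw [hE]; exact Finset.notMem_empty k)).symm]
        · have hj' := Finset.mem_erase.mp hj
          have hji : j ≠ i := hj'.1
          have hjv : y j = some 1 := by
            have hjne : y j ≠ some 0 := by
              have := hj'.2
              rw [Finset.mem_filter] at this
              exact fun hc => this.2 (by rw [hc]; rfl)
            cases hyj : y j with
            | none => exact absurd (hnone j hyj) hji
            | some a =>
              have : a ≠ 0 := fun hc => hjne (by rw [hyj, hc])
              rw [zmod2_cases a this]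
          have honly : ∀ k, k ≠ i → k ≠ j → y k = some 0 := by
            intro k hk hkj
            apply hval k hk
            intro hmem
            exact hkj (Finset.card_le_one.mp hcard1 k hmem j hj)
          refine ⟨(i, j), funext fun k => ?_⟩
          simp only [hh]
          by_cases hk : k = i
          · rw [if_pos hk, hk, hyi]
          · rw [if_neg hk]
            by_cases hkj : k = j
            · rw [if_pos hkj, hkj, hjv]
            · rw [if_neg hkj, (honly k hk hkj).symm]
      · rintro ⟨⟨i, j⟩, rfl⟩
        constructor
        · show (Finset.univ.filter fun k => h (i,j) k = none).card = 1
          have hset : (Finset.univ.filter fun k => h (i,j) k = none) = {i} := by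
            ext k
            simp only [Finset.mem_filter, Finset.mem_univ, true_and, Finset.mem_singleton, hh]
            by_cases hk : k = i
            · simp [hk]
            · rw [if_neg hk]
              by_cases hkj : k = j
              · rw [if_pos hkj]
                simp [hk]
              · rw [if_neg hkj]
                simp [hk]
          rw [hset, Finset.card_singleton]
        · show (Finset.univ.filter fun k => h (i,j) k ≠ emb (0:BW n) k).card ≤ 2
          have hsub : (Finset.univ.filter fun k => h (i,j) k ≠ emb (0:BW n) k)
              ⊆ {i, j} := by
            intro k hk
            simp only [Finset.mem_filter, Finset.mem_univ, true_and, hh, emb] at hk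
            simp only [Finset.mem_insert, Finset.mem_singleton]
            by_contra hc
            push_neg at hc
            rw [if_neg hc.1, if_neg hc.2] at hk
            exact hk rfl
          refine le_trans (Finset.card_le_card hsub) ?_
          refine le_trans (Finset.card_insert_le _ _) ?_
          simp
    rw [hA, ← Nat.card_coe_set_eq,
      Nat.card_congr (Equiv.ofInjective h hinj).symm]
    simp [Nat.card_eq_fintype_card, sq]
  · -- diameter of the anticode
    intro y hy y' hy'
    calc hammingDist y y' ≤ hammingDist y (emb 0) + hammingDist (emb 0) y' :=
          hammingDist_triangle _ _ _
      _ ≤ 2 + 2 := Nat.add_le_add hy.2 (by rw [hammingDist_comm]; exact hy'.2)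
      _ = 4 := rfl
  · -- the diameter perfect cardinality equation
    have hRP : Set.ncard R = Set.ncard P := by
      rw [hRimg]
      exact Set.ncard_image_of_injOn hg_injOn
    set φ : BW n →+ ZMod 2 × BW m := AddMonoidHom.mk' (fun x => (∑ i, x i, ∑ i, x i • α i))
      (fun x y => by
        simp only [Prod.mk_add_mk, Prod.mk.injEq]
        exact ⟨hadd_p x y, hadd_s α x y⟩) with hφ
    have hφ_apply : ∀ x : BW n, φ x = (∑ i, x i, ∑ i, x i • α i) := fun x => rfl
    have hφker : P = (φ.ker : Set (BW n)) := by
      ext x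
      simp only [SetLike.mem_coe, AddMonoidHom.mem_ker, hφ_apply, Prod.mk_eq_zero]
      exact Iff.rfl
    have hφsurj : Function.Surjective φ := by
      rintro ⟨ε, β⟩
      obtain ⟨j, hj⟩ := hα.surjective β
      obtain ⟨k, hk⟩ := hα.surjective 0
      have hε : ε = 0 ∨ ε = 1 := by
        revert ε; decide
      rcases hε with rfl|rfl
      · by_cases hβ : β = 0
        · exact ⟨0, by rw [hφ_apply]; simp [hβ]⟩
        · have hjk : j ≠ k := fun h => hβ (by rw [← hj, h, hk])
          refine ⟨Pi.single j 1 + Pi.single k 1, ?_⟩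
          rw [hφ_apply, hadd_p, hadd_s, hsingle_p, hsingle_p, hsingle_s, hsingle_s, hj, hk,
            add_zero]
          have : (1 + 1 : ZMod 2) = 0 := by decide
          rw [this]
      · refine ⟨Pi.single j 1, ?_⟩
        rw [hφ_apply, hsingle_p, hsingle_s, hj]
    have hquot : Nat.card (BW n ⧸ φ.ker) = 2 ^ (m + 1) := by
      rw [Nat.card_congr (QuotientAddGroup.quotientKerEquivRange φ).toEquiv]
      rw [AddMonoidHom.range_eq_top.mpr hφsurj]
      rw [AddSubgroup.card_top]
      simp [Nat.card_eq_fintype_card, ZMod.card, pow_succ, mul_comm]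
    have htotal : Nat.card (BW n) = 2 ^ n := by
      simp [Nat.card_eq_fintype_card, ZMod.card]
    have hker_card : Nat.card φ.ker * 2 ^ (m + 1) = 2 ^ n := by
      have h := AddSubgroup.card_eq_card_quotient_mul_card_addSubgroup (s := φ.ker)
      rw [htotal, hquot] at h
      rw [mul_comm]
      exact h.symm
    have hPcard : Set.ncard P = Nat.card φ.ker := by
      rw [hφker, ← Nat.card_coe_set_eq]
      rfl
    obtain ⟨K, hK⟩ : ∃ K, Nat.card φ.ker = K := ⟨_, rfl⟩
    rw [hRP, hPcard, hK]
    rw [hK] at hker_card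
    have hn1 : 1 ≤ (2:ℕ) ^ m := Nat.one_le_two_pow
    have key : K * n ^ 2 * 2 = n * 2 ^ (n - 1) * 2 := by
      rw [hn]
      calc K * ((2:ℕ) ^ m) ^ 2 * 2
          = K * 2 ^ (m + 1) * 2 ^ m := by ring
        _ = 2 ^ n * 2 ^ m := by rw [hker_card]
        _ = 2 ^ m * 2 ^ (2 ^ m - 1) * 2 := by
            have h2 : (2:ℕ) ^ (2 ^ m - 1) * 2 = 2 ^ (2 ^ m) := by
              rw [← pow_succ, Nat.sub_add_cancel hn1]
            calc (2:ℕ) ^ n * 2 ^ m = 2 ^ (2 ^ m) * 2 ^ m := by rw [hn]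
              _ = 2 ^ m * ((2:ℕ) ^ (2 ^ m - 1) * 2) := by rw [h2]; ring
              _ = 2 ^ m * 2 ^ (2 ^ m - 1) * 2 := by ring
    exact Nat.eq_of_mul_eq_mul_right (by norm_num) key
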